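/- Let I ⊂ ℝ be a compact interval and let g : I → ℝ³ be twice continuously differentiable with inf_I |g'| ≥ λ > 0. Then for every δ > 0 the one-dimensional Lebesgue measure of the set { q ∈ I : |g(q)| ≤ δ } is at most 8δλ^{−1} + 16|I| δ λ^{−2} max_I |g''|, where |I| is the length of I. -/

import Mathlib

set_option maxHeartbeats 1000000


open MeasureTheory

noncomputable section

abbrev E3 := EuclideanSpace ℝ (Fin 3)

/-- On a subinterval where `g'` stays within `lam/2` of `g' a`, the sublevel set
`{‖g‖ ≤ δ}` has measure at most `4δ/lam`. -/
lemma sublevel_small (A B a b : ℝ) (g g' : ℝ → E3) (lam δ : ℝ)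
    (hlam : 0 < lam) (hδ : 0 < δ)
    (hsub : Set.Icc a b ⊆ Set.Icc A B)
    (hg : ∀ q ∈ Set.Icc A B, HasDerivWithinAt g (g' q) (Set.Icc A B) q)
    (hlowa : lam ≤ ‖g' a‖)
    (hsmall : ∀ q ∈ Set.Icc a b, ‖g' q - g' a‖ ≤ lam / 2) :
    volume {q ∈ Set.Icc a b | ‖g q‖ ≤ δ} ≤ ENNReal.ofReal (4 * δ / lam) := by
  set v : E3 := g' a with hv
  have hvpos : 0 < ‖v‖ := lt_of_lt_of_le hlam hlowa
  set C : ℝ := lam * ‖v‖ / 2 with hC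
  -- the auxiliary function
  set ψ : ℝ → ℝ := fun t => inner ℝ v (g t) - C * t with hψ
  have hgc : ContinuousOn g (Set.Icc A B) := fun x hx => (hg x hx).continuousWithinAt
  have hψc : ContinuousOn ψ (Set.Icc a b) := by
    apply ContinuousOn.sub
    · exact (continuous_const.inner continuous_id').comp_continuousOn (hgc.mono hsub)
    · exact (continuous_const.mul continuous_id').continuousOn
  have hψd : ∀ x ∈ interior (Set.Icc a b), HasDerivAt ψ ((inner ℝ v (g' x) : ℝ) - C) x := by
    intro x hx
    rw [interior_Icc] at hx
    have hab' : a ≤ b := (hx.1.trans hx.2).le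
    have hxAB : Set.Icc A B ∈ nhds x :=
      Icc_mem_nhds (lt_of_le_of_lt (hsub (Set.left_mem_Icc.mpr hab')).1 hx.1)
        (lt_of_lt_of_le hx.2 (hsub (Set.right_mem_Icc.mpr hab')).2)
    have hxmem : x ∈ Set.Icc A B := mem_of_mem_nhds hxAB
    have h1 : HasDerivAt (fun t => (inner ℝ v (g t) : ℝ)) (inner ℝ v (g' x)) x := by
      have := (innerSL ℝ v).hasFDerivAt.comp_hasDerivWithinAt x (hg x hxmem)
      exact (this.hasDerivAt hxAB)
    have h2 : HasDerivAt (fun t => C * t) C x := by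
      simpa using (hasDerivAt_id x).const_mul C
    exact h1.sub h2
  have hψmono : MonotoneOn ψ (Set.Icc a b) := by
    apply monotoneOn_of_deriv_nonneg (convex_Icc a b) hψc
    · intro x hx; exact (hψd x hx).differentiableAt.differentiableWithinAt
    · intro x hx
      rw [(hψd x hx).deriv]
      have hxab : x ∈ Set.Icc a b := by
        rw [interior_Icc] at hx; exact ⟨hx.1.le, hx.2.le⟩
      have hinner : (inner ℝ v (g' x) : ℝ) ≥ ‖v‖ ^ 2 - ‖v‖ * (lam / 2) := by
        have : (inner ℝ v (g' x) : ℝ) = ‖v‖ ^ 2 + inner ℝ v (g' x - v) := by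
          rw [inner_sub_right, real_inner_self_eq_norm_sq]; ring
        rw [this]
        have := abs_real_inner_le_norm v (g' x - v)
        have hb := hsmall x hxab
        nlinarith [neg_abs_le (inner ℝ v (g' x - v) : ℝ)]
      have hv2 : lam * ‖v‖ ≤ ‖v‖ ^ 2 := by nlinarith
      simp only [hC]
      nlinarith
  -- distance bound between points of the sublevel set
  have hdist : ∀ p ∈ {q ∈ Set.Icc a b | ‖g q‖ ≤ δ}, ∀ q ∈ {q ∈ Set.Icc a b | ‖g q‖ ≤ δ},
      dist p q ≤ 4 * δ / lam := by
    have key : ∀ p ∈ {q ∈ Set.Icc a b | ‖g q‖ ≤ δ}, ∀ q ∈ {q ∈ Set.Icc a b | ‖g q‖ ≤ δ},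
        p ≤ q → q - p ≤ 4 * δ / lam := by
      rintro p ⟨hp, hgp⟩ q ⟨hq, hgq⟩ hpq
      have := hψmono hp hq hpq
      have hip : |(inner ℝ v (g p) : ℝ)| ≤ ‖v‖ * δ := by
        calc |(inner ℝ v (g p) : ℝ)| ≤ ‖v‖ * ‖g p‖ := abs_real_inner_le_norm v (g p)
          _ ≤ ‖v‖ * δ := by nlinarith
      have hiq : |(inner ℝ v (g q) : ℝ)| ≤ ‖v‖ * δ := by
        calc |(inner ℝ v (g q) : ℝ)| ≤ ‖v‖ * ‖g q‖ := abs_real_inner_le_norm v (g q)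
          _ ≤ ‖v‖ * δ := by nlinarith
      have hCq : C * (q - p) ≤ 2 * (‖v‖ * δ) := by
        have h1 : C * q - C * p ≤ (inner ℝ v (g q) : ℝ) - inner ℝ v (g p) := by
          simp only [hψ] at this; linarith
        have := abs_le.mp hip
        have := abs_le.mp hiq
        nlinarith
      have : lam * ‖v‖ * (q - p) ≤ 4 * (‖v‖ * δ) := by
        simp only [hC] at hCq; nlinarith
      rw [le_div_iff₀ hlam]
      nlinarith
    intro p hp q hq
    rcases le_total p q with h | h
    · rw [Real.dist_eq, abs_sub_comm, abs_of_nonneg (by linarith)]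
      exact key p hp q hq h
    · rw [Real.dist_eq, abs_of_nonneg (by linarith)]
      exact key q hq p hp h
  calc volume {q ∈ Set.Icc a b | ‖g q‖ ≤ δ} ≤ EMetric.diam {q ∈ Set.Icc a b | ‖g q‖ ≤ δ} :=
        Real.volume_le_diam _
    _ ≤ ENNReal.ofReal (4 * δ / lam) := by
        apply EMetric.diam_le
        intro p hp q hq
        rw [edist_dist]
        exact ENNReal.ofReal_le_ofReal (hdist p hp q hq)

theorem stmt14 (A B : ℝ) (hAB : A ≤ B) (g g' g'' : ℝ → E3) (lam δ : ℝ)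
    (hlam : 0 < lam) (hδ : 0 < δ)
    (hg : ∀ q ∈ Set.Icc A B, HasDerivWithinAt g (g' q) (Set.Icc A B) q)
    (hg' : ∀ q ∈ Set.Icc A B, HasDerivWithinAt g' (g'' q) (Set.Icc A B) q)
    (hcont : ContinuousOn g'' (Set.Icc A B))
    (hlow : ∀ q ∈ Set.Icc A B, lam ≤ ‖g' q‖) :
    volume {q ∈ Set.Icc A B | ‖g q‖ ≤ δ} ≤
      ENNReal.ofReal (8 * δ / lam +
        16 * (B - A) * δ / lam ^ 2 * sSup ((fun q => ‖g'' q‖) '' Set.Icc A B)) := by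
  set M := sSup ((fun q => ‖g'' q‖) '' Set.Icc A B) with hMdef
  have hbdd : BddAbove ((fun q => ‖g'' q‖) '' Set.Icc A B) :=
    (isCompact_Icc.image_of_continuousOn hcont.norm).bddAbove
  have hMle : ∀ q ∈ Set.Icc A B, ‖g'' q‖ ≤ M := fun q hq => le_csSup hbdd ⟨q, hq, rfl⟩
  have hM0 : (0:ℝ) ≤ M := le_trans (norm_nonneg _) (hMle A ⟨le_refl A, hAB⟩)
  have hlip : ∀ p ∈ Set.Icc A B, ∀ q ∈ Set.Icc A B, ‖g' q - g' p‖ ≤ M * |q - p| := by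
    intro p hp q hq
    simpa [Real.norm_eq_abs] using
      (convex_Icc A B).norm_image_sub_le_of_norm_hasDerivWithin_le hg' hMle hp hq
  rcases eq_or_lt_of_le hAB with rfl | hlt
  · have hsub : {q ∈ Set.Icc A A | ‖g q‖ ≤ δ} ⊆ {A} := by
      intro q hq
      have := hq.1
      simp_all [Set.Icc_self]
    exact le_trans (measure_mono hsub) (by simp)
  set n : ℕ := max 1 ⌈2 * M * (B - A) / lam⌉₊ with hn
  have hn1 : 1 ≤ n := le_max_left _ _
  have hnpos : (0:ℝ) < n := by exact_mod_cast Nat.pos_of_ne_zero (by omega)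
  set L : ℝ := (B - A) / n with hL
  have hLpos : 0 < L := div_pos (sub_pos.mpr hlt) hnpos
  have hnL : (n:ℝ) * L = B - A := by
    rw [hL]; field_simp
  have hML : M * L ≤ lam / 2 := by
    have hc : 2 * M * (B - A) / lam ≤ n :=
      le_trans (Nat.le_ceil _) (by exact_mod_cast Nat.cast_le.mpr (le_max_right 1 _))
    have h2 : 2 * M * (B - A) ≤ n * lam := (div_le_iff₀ hlam).mp hc
    rw [hL, ← mul_div_assoc, div_le_iff₀ hnpos]
    nlinarith
  set x : ℕ → ℝ := fun i => A + i * L with hx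
  have hxA : ∀ i : ℕ, A ≤ x i := by
    intro i; simp only [hx]; nlinarith [Nat.cast_nonneg (α := ℝ) i, hLpos.le]
  have hxB : ∀ i : ℕ, i ≤ n → x i ≤ B := by
    intro i hi
    have : (i:ℝ) * L ≤ n * L := by
      have : (i:ℝ) ≤ n := by exact_mod_cast hi
      nlinarith
    simp only [hx]; linarith [hnL]
  have hcover : {q ∈ Set.Icc A B | ‖g q‖ ≤ δ} ⊆
      ⋃ i ∈ Finset.range n, {q ∈ Set.Icc (x i) (x (i+1)) | ‖g q‖ ≤ δ} := by
    rintro q ⟨hq, hgq⟩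
    set j : ℕ := min (n-1) ⌊(q - A)/L⌋₊ with hj
    have hjn : j < n := lt_of_le_of_lt (min_le_left _ _) (by omega)
    refine Set.mem_biUnion (Finset.mem_range.mpr hjn) ⟨⟨?_, ?_⟩, hgq⟩
    · -- x j ≤ q
      have h1 : (j:ℝ) ≤ ⌊(q - A)/L⌋₊ := by exact_mod_cast min_le_right (n-1) _
      have h2 : (⌊(q - A)/L⌋₊ : ℝ) ≤ (q - A)/L :=
        Nat.floor_le (div_nonneg (by linarith [hq.1]) hLpos.le)
      have : (j:ℝ) * L ≤ q - A := by
        have := h1.trans h2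
        calc (j:ℝ) * L ≤ ((q - A)/L) * L := by nlinarith
          _ = q - A := by field_simp
      simp only [hx]; linarith
    · -- q ≤ x (j+1)
      rcases le_or_gt ⌊(q - A)/L⌋₊ (n-1) with hcase | hcase
      · have hjf : j = ⌊(q - A)/L⌋₊ := min_eq_right hcase
        have h3 : (q - A)/L < (j:ℝ) + 1 := by
          rw [hjf]; push_cast; exact Nat.lt_floor_add_one _
        have : q - A < ((j:ℝ) + 1) * L := by
          calc q - A = ((q - A)/L) * L := by field_simp
            _ < ((j:ℝ) + 1) * L := by nlinarith
        simp only [hx]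
        push_cast
        linarith
      · have hjf : j = n - 1 := min_eq_left hcase.le
        have : j + 1 = n := by omega
        rw [this]
        calc q ≤ B := hq.2
          _ = x n := by simp only [hx]; linarith [hnL]
  have hpiece : ∀ i ∈ Finset.range n,
      volume {q ∈ Set.Icc (x i) (x (i+1)) | ‖g q‖ ≤ δ} ≤ ENNReal.ofReal (4 * δ / lam) := by
    intro i hi
    have hin : i < n := Finset.mem_range.mp hi
    have hsub : Set.Icc (x i) (x (i+1)) ⊆ Set.Icc A B :=
      Set.Icc_subset_Icc (hxA i) (hxB (i+1) hin)
    refine sublevel_small A B (x i) (x (i+1)) g g' lam δ hlam hδ hsub hg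
      (hlow (x i) ⟨hxA i, hxB i hin.le⟩) ?_
    intro q hq
    have hq1 : 0 ≤ q - x i := by linarith [hq.1]
    have hq2 : q - x i ≤ L := by
      have : x (i+1) = x i + L := by simp only [hx]; push_cast; ring
      linarith [hq.2]
    have := hlip (x i) ⟨hxA i, hxB i hin.le⟩ q (hsub hq)
    rw [abs_of_nonneg hq1] at this
    nlinarith
  have hnle : (n:ℝ) ≤ 2 * M * (B - A) / lam + 1 := by
    have hc0 : (0:ℝ) ≤ 2 * M * (B - A) / lam := div_nonneg (by nlinarith) hlam.le
    have h1 : (⌈2 * M * (B - A) / lam⌉₊ : ℝ) < 2 * M * (B - A) / lam + 1 :=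
      Nat.ceil_lt_add_one hc0
    have : (n:ℝ) = max 1 (⌈2 * M * (B - A) / lam⌉₊ : ℝ) := by
      rw [hn]; push_cast; rfl
    rw [this]
    apply max_le (by linarith) h1.le
  calc volume {q ∈ Set.Icc A B | ‖g q‖ ≤ δ}
      ≤ volume (⋃ i ∈ Finset.range n, {q ∈ Set.Icc (x i) (x (i+1)) | ‖g q‖ ≤ δ}) :=
        measure_mono hcover
    _ ≤ ∑ i ∈ Finset.range n, volume {q ∈ Set.Icc (x i) (x (i+1)) | ‖g q‖ ≤ δ} :=
        measure_biUnion_finset_le _ _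
    _ ≤ ∑ i ∈ Finset.range n, ENNReal.ofReal (4 * δ / lam) := Finset.sum_le_sum hpiece
    _ = (n : ENNReal) * ENNReal.ofReal (4 * δ / lam) := by
        rw [Finset.sum_const, Finset.card_range]; simp [nsmul_eq_mul]
    _ = ENNReal.ofReal ((n:ℝ) * (4 * δ / lam)) := by
        rw [← ENNReal.ofReal_natCast n, ← ENNReal.ofReal_mul (Nat.cast_nonneg n)]
    _ ≤ ENNReal.ofReal (8 * δ / lam + 16 * (B - A) * δ / lam ^ 2 * M) := by
        apply ENNReal.ofReal_le_ofReal
        have hstep : (n:ℝ) * (4 * δ / lam) ≤ (2 * M * (B - A) / lam + 1) * (4 * δ / lam) := by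
          have h4 : 0 < 4 * δ / lam := by positivity
          nlinarith
        refine hstep.trans ?_
        have key : 8 * δ / lam + 16 * (B - A) * δ / lam ^ 2 * M -
            (2 * M * (B - A) / lam + 1) * (4 * δ / lam) =
            4 * δ / lam + 8 * (B - A) * δ / lam ^ 2 * M := by
          field_simp
          ring
        have t1 : (0:ℝ) ≤ 4 * δ / lam := by positivity
        have t2 : (0:ℝ) ≤ 8 * (B - A) * δ / lam ^ 2 * M := by
          apply mul_nonneg _ hM0
          apply div_nonneg _ (by positivity)
          exact mul_nonneg (mul_nonneg (by norm_num : (0:ℝ) ≤ 8) (by linarith)) hδ.le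
        linarith

end
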